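/- arXiv:1204.4313 — 10 statements merged into one kernel-verified Lean document; each statement's English description precedes it below -/
import Mathlib

section
/- Let A ⪰ 0 and B ⪰ 0 be real symmetric matrices partitioned compatibly into m×m blocks of sizes p×p and q×q respectively. Then the Khatri-Rao product A ∗ B := (A_{ij} ⊗ B_{ij})_{i,j=1}^m is positive semidefinite. -/
open Kronecker

lemma kron_posSemidef {n n' : Type*} [Fintype n] [Fintype n'] [DecidableEq n] [DecidableEq n']
    (A : Matrix n n ℝ) (B : Matrix n' n' ℝ) (hA : A.PosSemidef) (hB : B.PosSemidef) :
    (A ⊗ₖ B).PosSemidef := by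
  obtain ⟨M, rfl⟩ : ∃ M : Matrix n n ℝ, A = Matrix.conjTranspose M * M := by
    open scoped MatrixOrder in exact CStarAlgebra.nonneg_iff_eq_star_mul_self.mp hA.nonneg
  obtain ⟨N, rfl⟩ : ∃ N : Matrix n' n' ℝ, B = Matrix.conjTranspose N * N := by
    open scoped MatrixOrder in exact CStarAlgebra.nonneg_iff_eq_star_mul_self.mp hB.nonneg
  rw [Matrix.mul_kronecker_mul]
  have : (Matrix.conjTranspose M) ⊗ₖ (Matrix.conjTranspose N) = Matrix.conjTranspose (M ⊗ₖ N) := by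
    ext ⟨i,j⟩ ⟨k,l⟩
    simp [Matrix.conjTranspose_apply, Matrix.kroneckerMap_apply]
  rw [this]
  exact Matrix.posSemidef_conjTranspose_mul_self _

/-- Khatri-Rao product of positive semidefinite matrices: if A ⪰ 0 has m×m
blocks of size p×p and B ⪰ 0 has m×m blocks of size q×q, then the blockwise
Kronecker product A ∗ B = (A_{ij} ⊗ B_{ij})_{i,j} is positive semidefinite. -/
theorem khatriRao_posSemidef {m p q : ℕ}
    (A : Matrix (Fin m × Fin p) (Fin m × Fin p) ℝ)
    (B : Matrix (Fin m × Fin q) (Fin m × Fin q) ℝ)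
    (hA : A.PosSemidef) (hB : B.PosSemidef) :
    (Matrix.of fun x y : Fin m × (Fin p × Fin q) =>
      A (x.1, x.2.1) (y.1, y.2.1) * B (x.1, x.2.2) (y.1, y.2.2)).PosSemidef := by
  have h := (kron_posSemidef A B hA hB).submatrix
    (fun x : Fin m × (Fin p × Fin q) => ((x.1, x.2.1), (x.1, x.2.2)))
  convert h using 2
  rfl
end

section
/- Let A(x) = A_0 + ∑_{p=1}^n x_p A_p and B(x) = B_0 + ∑_{p=1}^n x_p B_p be linear matrix pencils with A_p ∈ S_k, B_p ∈ S_l. Suppose there exists a symmetric kl×kl matrix C = (C_{ij})_{i,j=1}^k with l×l blocks such that C ⪰ 0 and B_p = ∑_{i,j=1}^k a^p_{ij} C_{ij} for all p = 0,1,…,n, where a^p_{ij} is the (i,j) entry of A_p. Then S_A ⊆ S_B, i.e., A(x) ⪰ 0 implies B(x) ⪰ 0 for every x ∈ ℝ^n. -/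
private lemma comm5 {k l : ℕ} (f : Fin l → Fin l → Fin k → Fin k → Fin k → ℝ) :
    (∑ s : Fin l, ∑ t : Fin l, ∑ i : Fin k, ∑ j : Fin k, ∑ m : Fin k, f s t i j m)
      = ∑ m : Fin k, ∑ i : Fin k, ∑ s : Fin l, ∑ j : Fin k, ∑ t : Fin l, f s t i j m := by
  calc (∑ s : Fin l, ∑ t : Fin l, ∑ i : Fin k, ∑ j : Fin k, ∑ m : Fin k, f s t i j m)
      = ∑ s : Fin l, ∑ t : Fin l, ∑ i : Fin k, ∑ m : Fin k, ∑ j : Fin k, f s t i j m :=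
        Finset.sum_congr rfl fun s _ => Finset.sum_congr rfl fun t _ =>
          Finset.sum_congr rfl fun i _ => Finset.sum_comm
    _ = ∑ s : Fin l, ∑ t : Fin l, ∑ m : Fin k, ∑ i : Fin k, ∑ j : Fin k, f s t i j m :=
        Finset.sum_congr rfl fun s _ => Finset.sum_congr rfl fun t _ => Finset.sum_comm
    _ = ∑ s : Fin l, ∑ m : Fin k, ∑ t : Fin l, ∑ i : Fin k, ∑ j : Fin k, f s t i j m :=
        Finset.sum_congr rfl fun s _ => Finset.sum_comm
    _ = ∑ m : Fin k, ∑ s : Fin l, ∑ t : Fin l, ∑ i : Fin k, ∑ j : Fin k, f s t i j m :=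
        Finset.sum_comm
    _ = ∑ m : Fin k, ∑ s : Fin l, ∑ i : Fin k, ∑ t : Fin l, ∑ j : Fin k, f s t i j m :=
        Finset.sum_congr rfl fun m _ => Finset.sum_congr rfl fun s _ => Finset.sum_comm
    _ = ∑ m : Fin k, ∑ i : Fin k, ∑ s : Fin l, ∑ t : Fin l, ∑ j : Fin k, f s t i j m :=
        Finset.sum_congr rfl fun m _ => Finset.sum_comm
    _ = ∑ m : Fin k, ∑ i : Fin k, ∑ s : Fin l, ∑ j : Fin k, ∑ t : Fin l, f s t i j m :=
        Finset.sum_congr rfl fun m _ => Finset.sum_congr rfl fun i _ =>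
          Finset.sum_congr rfl fun s _ => Finset.sum_comm

/-- Sufficient containment criterion (4.1): if there is a psd block matrix
C = (C_{ij}) with B_p = ∑_{i,j} a^p_{ij} C_{ij} for all p = 0,…,n, then
S_A ⊆ S_B for the pencils A(x) = A_0 + ∑ x_p A_p, B(x) = B_0 + ∑ x_p B_p. -/
theorem containment_criterion {n k l : ℕ}
    (A : Fin (n + 1) → Matrix (Fin k) (Fin k) ℝ)
    (B : Fin (n + 1) → Matrix (Fin l) (Fin l) ℝ)
    (hAsymm : ∀ p, (A p).IsSymm) (hBsymm : ∀ p, (B p).IsSymm)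
    (C : Matrix (Fin k × Fin l) (Fin k × Fin l) ℝ)
    (hC : C.PosSemidef)
    (hlin : ∀ p, B p = Matrix.of fun s t : Fin l =>
      ∑ i : Fin k, ∑ j : Fin k, A p i j * C (i, s) (j, t)) :
    {x : Fin n → ℝ | (A 0 + ∑ p : Fin n, x p • A p.succ).PosSemidef} ⊆
      {x : Fin n → ℝ | (B 0 + ∑ p : Fin n, x p • B p.succ).PosSemidef} := by
  intro x hx
  simp only [Set.mem_setOf_eq] at hx ⊢
  set AX := A 0 + ∑ p : Fin n, x p • A p.succ with hAXdef
  -- entrywise formula for the B-pencil in terms of the A-pencil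
  have key : ∀ s t, (B 0 + ∑ p : Fin n, x p • B p.succ) s t
      = ∑ i : Fin k, ∑ j : Fin k, AX i j * C (i, s) (j, t) := by
    intro s t
    simp only [hAXdef, Matrix.add_apply, Matrix.sum_apply, Matrix.smul_apply, hlin,
      Matrix.of_apply, smul_eq_mul, add_mul, Finset.sum_add_distrib, Finset.mul_sum,
      Finset.sum_mul]
    congr 1
    rw [Finset.sum_comm]
    refine Finset.sum_congr rfl fun i _ => ?_
    rw [Finset.sum_comm]
    exact Finset.sum_congr rfl fun j _ => Finset.sum_congr rfl fun p _ => by ring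
  -- a square-root factorization of the A-pencil
  obtain ⟨M, hM⟩ : ∃ M : Matrix (Fin k) (Fin k) ℝ, AX = M.conjTranspose * M := by
    open scoped MatrixOrder in exact CStarAlgebra.nonneg_iff_eq_star_mul_self.mp hx.nonneg
  have hAXentry : ∀ i j, AX i j = ∑ m : Fin k, M m i * M m j := by
    intro i j
    rw [hM]
    simp [Matrix.mul_apply, Matrix.conjTranspose_apply]
  rw [Matrix.posSemidef_iff_dotProduct_mulVec]
  constructor
  · -- hermitian
    have hsum : ((B 0 + ∑ p : Fin n, x p • B p.succ)).IsSymm := by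
      apply Matrix.IsSymm.add (hBsymm 0)
      rw [Matrix.IsSymm]
      rw [Matrix.transpose_sum]
      refine Finset.sum_congr rfl fun p _ => ?_
      rw [Matrix.transpose_smul, (hBsymm p.succ)]
    rw [Matrix.IsHermitian]
    ext s t
    simpa [Matrix.conjTranspose_apply] using (congrFun (congrFun hsum t) s).symm
  · intro v
    have hval : dotProduct (star v) ((B 0 + ∑ p : Fin n, x p • B p.succ).mulVec v)
        = ∑ m : Fin k, dotProduct
            (star (fun is : Fin k × Fin l => M m is.1 * v is.2))
            (C.mulVec (fun is : Fin k × Fin l => M m is.1 * v is.2)) := by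
      simp only [dotProduct, Matrix.mulVec, Pi.star_apply, star_trivial,
        Fintype.sum_prod_type]
      calc ∑ s : Fin l, v s * ∑ t : Fin l, (B 0 + ∑ p : Fin n, x p • B p.succ) s t * v t
          = ∑ s : Fin l, ∑ t : Fin l, ∑ i : Fin k, ∑ j : Fin k, ∑ m : Fin k,
              (M m i * v s) * (C (i, s) (j, t) * (M m j * v t)) := by
            refine Finset.sum_congr rfl fun s _ => ?_
            rw [Finset.mul_sum]
            refine Finset.sum_congr rfl fun t _ => ?_
            rw [key s t, Finset.sum_mul, Finset.mul_sum]
            refine Finset.sum_congr rfl fun i _ => ?_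
            rw [Finset.sum_mul, Finset.mul_sum]
            refine Finset.sum_congr rfl fun j _ => ?_
            rw [hAXentry i j, Finset.sum_mul, Finset.sum_mul, Finset.mul_sum]
            exact Finset.sum_congr rfl fun m _ => by ring
        _ = ∑ m : Fin k, ∑ i : Fin k, ∑ s : Fin l, ∑ j : Fin k, ∑ t : Fin l,
              (M m i * v s) * (C (i, s) (j, t) * (M m j * v t)) :=
            comm5 _
        _ = ∑ m : Fin k, ∑ i : Fin k, ∑ s : Fin l, (M m i * v s) *
              ∑ j : Fin k, ∑ t : Fin l, C (i, s) (j, t) * (M m j * v t) := by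
            refine Finset.sum_congr rfl fun m _ => Finset.sum_congr rfl fun i _ =>
              Finset.sum_congr rfl fun s _ => ?_
            rw [Finset.mul_sum]
            exact Finset.sum_congr rfl fun j _ => (Finset.mul_sum _ _ _).symm
    rw [hval]
    exact Finset.sum_nonneg fun m _ => hC.dotProduct_mulVec_nonneg _
end

section
/- Let A(x), B(x) be linear pencils as above. Suppose C = (C_{ij})_{i,j=1}^k ⪰ 0 satisfies B_0 − ∑_{i,j} a^0_{ij} C_{ij} ⪰ 0 and B_p = ∑_{i,j} a^p_{ij} C_{ij} for all p = 1,…,n. Then S_A ⊆ S_B. -/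
/-- The map M ↦ (∑ᵢⱼ Mᵢⱼ C⁽ⁱˢ⁾⁽ʲᵗ⁾). -/
def relaxedPhi {k l : ℕ} (C : Matrix (Fin k × Fin l) (Fin k × Fin l) ℝ)
    (M : Matrix (Fin k) (Fin k) ℝ) : Matrix (Fin l) (Fin l) ℝ :=
  Matrix.of fun s t : Fin l => ∑ i : Fin k, ∑ j : Fin k, M i j * C (i, s) (j, t)

lemma relaxedPhi_add {k l : ℕ} (C : Matrix (Fin k × Fin l) (Fin k × Fin l) ℝ)
    (M N : Matrix (Fin k) (Fin k) ℝ) :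
    relaxedPhi C (M + N) = relaxedPhi C M + relaxedPhi C N := by
  ext s t
  simp [relaxedPhi, add_mul, Finset.sum_add_distrib]

lemma relaxedPhi_smul {k l : ℕ} (C : Matrix (Fin k × Fin l) (Fin k × Fin l) ℝ)
    (c : ℝ) (M : Matrix (Fin k) (Fin k) ℝ) :
    relaxedPhi C (c • M) = c • relaxedPhi C M := by
  ext s t
  simp [relaxedPhi, Finset.mul_sum, mul_assoc]

lemma posSemidef_sum {m : Type*} [Fintype m] [DecidableEq m] {ι : Type*} [DecidableEq ι] (s : Finset ι)
    (f : ι → Matrix m m ℝ) (hf : ∀ i ∈ s, (f i).PosSemidef) :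
    (∑ i ∈ s, f i).PosSemidef := by
  induction s using Finset.induction with
  | empty => simpa using Matrix.PosSemidef.zero
  | insert _ _ h ih =>
    rw [Finset.sum_insert h]
    exact (hf _ (Finset.mem_insert_self _ _)).add
      (ih fun i hi => hf i (Finset.mem_insert_of_mem hi))

open scoped MatrixOrder in
lemma relaxedPhi_posSemidef {k l : ℕ} {C : Matrix (Fin k × Fin l) (Fin k × Fin l) ℝ}
    (hC : C.PosSemidef) {M : Matrix (Fin k) (Fin k) ℝ} (hM : M.PosSemidef) :
    (relaxedPhi C M).PosSemidef := by
  set S := CFC.sqrt M with hSdef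
  have hSsq : S * S = M := CFC.sqrt_mul_sqrt_self M hM.nonneg
  have hSsymm : ∀ i r, S i r = S r i := fun i r => by
    have := (Matrix.nonneg_iff_posSemidef.mp (CFC.sqrt_nonneg M)).isHermitian.apply r i
    simpa using this
  -- Z r : the matrix with (Z r) (i, s') s = S r i * δ_{s' s}
  set Z : Fin k → Matrix (Fin k × Fin l) (Fin l) ℝ :=
    fun r => Matrix.of fun p s => S r p.1 * (if p.2 = s then (1 : ℝ) else 0) with hZdef
  have hrep : relaxedPhi C M = ∑ r : Fin k, (Matrix.conjTranspose (Z r) * C * Z r) := by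
    ext s t
    simp only [Matrix.sum_apply, Matrix.mul_apply, Matrix.conjTranspose_apply, hZdef,
      Matrix.of_apply, star_trivial, Fintype.sum_prod_type]
    have step : ∀ r : Fin k,
        (∑ j : Fin k, ∑ t' : Fin l,
          (∑ i : Fin k, ∑ s' : Fin l,
            S r i * (if s' = s then (1:ℝ) else 0) * C (i, s') (j, t')) *
          (S r j * (if t' = t then (1:ℝ) else 0)))
        = ∑ i : Fin k, ∑ j : Fin k, (S r i * S r j) * C (i, s) (j, t) := by
      intro r
      simp only [mul_ite, mul_one, mul_zero, ite_mul, zero_mul,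
        Finset.sum_ite_eq', Finset.sum_ite_eq, Finset.mem_univ, if_true]
      simp only [Finset.sum_mul]
      rw [Finset.sum_comm]
      refine Finset.sum_congr rfl fun i _ => Finset.sum_congr rfl fun j _ => ?_
      ring
    rw [Finset.sum_congr rfl fun r _ => step r]
    calc relaxedPhi C M s t
        = ∑ i : Fin k, ∑ j : Fin k, (∑ r : Fin k, S r i * S r j) * C (i, s) (j, t) := by
          simp only [relaxedPhi, Matrix.of_apply]
          refine Finset.sum_congr rfl fun i _ => Finset.sum_congr rfl fun j _ => ?_
          congr 1
          rw [show M i j = ∑ r : Fin k, S i r * S r j from by rw [← hSsq]; rfl]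
          exact Finset.sum_congr rfl fun r _ => by rw [hSsymm i r]
      _ = ∑ i : Fin k, ∑ r : Fin k, ∑ j : Fin k, (S r i * S r j) * C (i, s) (j, t) := by
          refine Finset.sum_congr rfl fun i _ => ?_
          simp only [Finset.sum_mul]
          exact Finset.sum_comm
      _ = ∑ r : Fin k, ∑ i : Fin k, ∑ j : Fin k, (S r i * S r j) * C (i, s) (j, t) :=
          Finset.sum_comm
  rw [hrep]
  exact posSemidef_sum _ _ fun r _ => hC.conjTranspose_mul_mul_same (Z r)

/-- Relaxed containment criterion (4.2): if C ⪰ 0 satisfies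
B_0 − ∑_{i,j} a^0_{ij} C_{ij} ⪰ 0 and B_p = ∑_{i,j} a^p_{ij} C_{ij} for
p = 1,…,n, then S_A ⊆ S_B. -/
theorem relaxed_containment_criterion {n k l : ℕ}
    (A : Fin (n + 1) → Matrix (Fin k) (Fin k) ℝ)
    (B : Fin (n + 1) → Matrix (Fin l) (Fin l) ℝ)
    (hAsymm : ∀ p, (A p).IsSymm) (hBsymm : ∀ p, (B p).IsSymm)
    (C : Matrix (Fin k × Fin l) (Fin k × Fin l) ℝ)
    (hC : C.PosSemidef)
    (hconst : (B 0 - Matrix.of fun s t : Fin l =>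
      ∑ i : Fin k, ∑ j : Fin k, A 0 i j * C (i, s) (j, t)).PosSemidef)
    (hlin : ∀ p : Fin n, B p.succ = Matrix.of fun s t : Fin l =>
      ∑ i : Fin k, ∑ j : Fin k, A p.succ i j * C (i, s) (j, t)) :
    {x : Fin n → ℝ | (A 0 + ∑ p : Fin n, x p • A p.succ).PosSemidef} ⊆
      {x : Fin n → ℝ | (B 0 + ∑ p : Fin n, x p • B p.succ).PosSemidef} := by
  intro x hx
  simp only [Set.mem_setOf_eq] at hx ⊢
  have hB : B 0 + ∑ p : Fin n, x p • B p.succ =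
      (B 0 - relaxedPhi C (A 0)) + relaxedPhi C (A 0 + ∑ p : Fin n, x p • A p.succ) := by
    have hsum : relaxedPhi C (A 0 + ∑ p : Fin n, x p • A p.succ) =
        relaxedPhi C (A 0) + ∑ p : Fin n, x p • relaxedPhi C (A p.succ) := by
      rw [relaxedPhi_add]
      congr 1
      induction (Finset.univ : Finset (Fin n)) using Finset.induction with
      | empty =>
        ext s t
        simp [relaxedPhi]
      | insert _ _ h ih =>
        rw [Finset.sum_insert h, Finset.sum_insert h, relaxedPhi_add, relaxedPhi_smul, ih]
    rw [hsum]
    have hBeq : ∀ p : Fin n, B p.succ = relaxedPhi C (A p.succ) := fun p => hlin p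
    simp only [← hBeq]
    abel
  rw [hB]
  exact (hconst).add (relaxedPhi_posSemidef hC hx)
end

section
/- Let A(x) ∈ S_k[x] and B(x) ∈ S_l[x] be linear pencils and suppose S_A is contained in the nonnegative orthant {x ∈ ℝ^n : x ≥ 0}. If there exists C = (C_{ij})_{i,j=1}^k ⪰ 0 with B_0 − ∑_{i,j} a^0_{ij} C_{ij} ⪰ 0 and B_p − ∑_{i,j} a^p_{ij} C_{ij} ⪰ 0 for all p = 1,…,n, then S_A ⊆ S_B. -/
open Matrix Finset

lemma psd_smul_nonneg {m : ℕ} {M : Matrix (Fin m) (Fin m) ℝ} (hM : M.PosSemidef)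
    {c : ℝ} (hc : 0 ≤ c) : (c • M).PosSemidef := by
  refine ⟨?_, fun v => ?_⟩
  · unfold Matrix.IsHermitian
    rw [conjTranspose_smul, hM.1.eq]
    simp
  · have := hM.2 v
    convert mul_nonneg hc this using 1
    rw [Finsupp.mul_sum]
    refine Finsupp.sum_congr fun i _ => ?_
    rw [Finsupp.mul_sum]
    refine Finsupp.sum_congr fun j _ => ?_
    simp only [Matrix.smul_apply, smul_eq_mul, star_trivial]
    ring

lemma psd_sum {m : ℕ} {ι : Type*} (s : Finset ι) (f : ι → Matrix (Fin m) (Fin m) ℝ)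
    (h : ∀ i ∈ s, (f i).PosSemidef) : (∑ i ∈ s, f i).PosSemidef := by
  classical
  induction s using Finset.induction with
  | empty => simpa using Matrix.PosSemidef.zero
  | insert _ _ hi ih =>
    rw [Finset.sum_insert hi]
    exact (h _ (Finset.mem_insert_self _ _)).add
      (ih fun i his => h i (Finset.mem_insert_of_mem his))

lemma sum3_comm {α β γ M : Type*} [Fintype α] [Fintype β] [Fintype γ]
    [AddCommMonoid M] (f : α → β → γ → M) :
    ∑ a : α, ∑ b : β, ∑ c : γ, f a b c = ∑ c : γ, ∑ a : α, ∑ b : β, f a b c := by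
  calc ∑ a : α, ∑ b : β, ∑ c : γ, f a b c
      = ∑ a : α, ∑ c : γ, ∑ b : β, f a b c :=
        Finset.sum_congr rfl fun a _ => Finset.sum_comm
    _ = ∑ c : γ, ∑ a : α, ∑ b : β, f a b c := Finset.sum_comm

/-- The contraction `A ↦ (∑ i j, A i j * C (i,s) (j,t))ₛₜ` as a linear map. -/
noncomputable def mapC {k l : ℕ} (C : Matrix (Fin k × Fin l) (Fin k × Fin l) ℝ) :
    Matrix (Fin k) (Fin k) ℝ →ₗ[ℝ] Matrix (Fin l) (Fin l) ℝ where
  toFun A := Matrix.of fun s t : Fin l =>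
    ∑ i : Fin k, ∑ j : Fin k, A i j * C (i, s) (j, t)
  map_add' A A' := by
    ext s t
    simp [add_mul, Finset.sum_add_distrib]
  map_smul' c A := by
    ext s t
    simp [Finset.mul_sum, mul_assoc]

/-- If `A` and `C` are PSD, the partial contraction matrix is PSD. -/
lemma contraction_psd {k l : ℕ} {A : Matrix (Fin k) (Fin k) ℝ} (hA : A.PosSemidef)
    {C : Matrix (Fin k × Fin l) (Fin k × Fin l) ℝ} (hC : C.PosSemidef) :
    (mapC C A).PosSemidef := by
  obtain ⟨Q, hQ⟩ : ∃ Q : Matrix (Fin k) (Fin k) ℝ, A = Qᴴ * Q := by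
    open scoped MatrixOrder in
    exact CStarAlgebra.nonneg_iff_eq_star_mul_self.mp hA.nonneg
  set P : Fin k → Matrix (Fin k × Fin l) (Fin l) ℝ := fun r =>
    Matrix.of fun (p : Fin k × Fin l) (t : Fin l) =>
      Q r p.1 * (if p.2 = t then 1 else 0) with hP
  have key : mapC C A = ∑ r : Fin k, (P r)ᴴ * C * (P r) := by
    ext s t
    have hentry : ∀ r : Fin k, ((P r)ᴴ * C * (P r)) s t
        = ∑ i : Fin k, ∑ j : Fin k, Q r i * Q r j * C (i, s) (j, t) := by
      intro r
      simp only [Matrix.mul_apply, Matrix.conjTranspose_apply, hP, Matrix.of_apply,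
        star_trivial, Fintype.sum_prod_type, mul_ite, ite_mul, mul_one, one_mul,
        mul_zero, zero_mul, Finset.sum_ite_eq, Finset.sum_ite_eq', Finset.mem_univ,
        if_true, Finset.sum_mul, Finset.mul_sum]
      rw [Finset.sum_comm]
      exact Finset.sum_congr rfl fun i _ => Finset.sum_congr rfl fun j _ => by ring
    simp only [Matrix.sum_apply, hentry, mapC, LinearMap.coe_mk, AddHom.coe_mk,
      Matrix.of_apply, hQ, Matrix.mul_apply, Matrix.transpose_apply,
      Matrix.conjTranspose_apply, star_trivial, Finset.sum_mul]
    rw [sum3_comm (f := fun i j r => Q r i * Q r j * C (i, s) (j, t))]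
  rw [key]
  exact psd_sum _ _ fun r _ => hC.conjTranspose_mul_mul_same (P r)

/-- Containment criterion for spectrahedra in the nonnegative orthant (4.5):
if S_A lies in the nonnegative orthant and C ⪰ 0 satisfies
B_p − ∑_{i,j} a^p_{ij} C_{ij} ⪰ 0 for all p = 0,…,n, then S_A ⊆ S_B. -/
theorem positive_orthant_containment_criterion {n k l : ℕ}
    (A : Fin (n + 1) → Matrix (Fin k) (Fin k) ℝ)
    (B : Fin (n + 1) → Matrix (Fin l) (Fin l) ℝ)
    (hAsymm : ∀ p, (A p).IsSymm) (hBsymm : ∀ p, (B p).IsSymm)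
    (horthant : ∀ x : Fin n → ℝ,
      (A 0 + ∑ p : Fin n, x p • A p.succ).PosSemidef → ∀ p, 0 ≤ x p)
    (C : Matrix (Fin k × Fin l) (Fin k × Fin l) ℝ)
    (hC : C.PosSemidef)
    (hpsd : ∀ p : Fin (n + 1), (B p - Matrix.of fun s t : Fin l =>
      ∑ i : Fin k, ∑ j : Fin k, A p i j * C (i, s) (j, t)).PosSemidef) :
    {x : Fin n → ℝ | (A 0 + ∑ p : Fin n, x p • A p.succ).PosSemidef} ⊆
      {x : Fin n → ℝ | (B 0 + ∑ p : Fin n, x p • B p.succ).PosSemidef} := by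
  intro x hA
  simp only [Set.mem_setOf_eq] at hA ⊢
  have hx : ∀ p, 0 ≤ x p := horthant x hA
  have hpsd' : ∀ p : Fin (n + 1), (B p - mapC C (A p)).PosSemidef := hpsd
  have hM := contraction_psd hA hC
  have hD : ((B 0 - mapC C (A 0)) +
      ∑ p : Fin n, x p • (B p.succ - mapC C (A p.succ))).PosSemidef :=
    (hpsd' 0).add (psd_sum _ _ fun p _ => psd_smul_nonneg (hpsd' p.succ) (hx p))
  have heq : B 0 + ∑ p : Fin n, x p • B p.succ =
      ((B 0 - mapC C (A 0)) + ∑ p : Fin n, x p • (B p.succ - mapC C (A p.succ))) +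
        mapC C (A 0 + ∑ p : Fin n, x p • A p.succ) := by
    rw [map_add, map_sum]
    simp only [_root_.map_smul, smul_sub, Finset.sum_sub_distrib]
    abel
  rw [heq]
  exact hD.add hM
end

section
/- Transitivity of the containment criterion: let D(x) ∈ S_d[x], E(x) ∈ S_e[x], F(x) ∈ S_f[x] be linear pencils in n variables. Suppose C^{DE} ⪰ 0 (d×d blocks of size e×e) satisfies E_p = ∑_{i,j=1}^d d^p_{ij} C^{DE}_{ij} for p = 0,…,n, and C^{EF} ⪰ 0 (e×e blocks of size f×f) satisfies F_p = ∑_{s,t=1}^e e^p_{st} C^{EF}_{st} for p = 0,…,n. Then the matrix C^{DF} with blocks C^{DF}_{ij} := ∑_{s,t=1}^e (C^{DE}_{ij})_{st} C^{EF}_{st} is positive semidefinite and satisfies F_p = ∑_{i,j=1}^d d^p_{ij} C^{DF}_{ij} for all p = 0,…,n. -/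
private lemma sum_swap2 {M : Type*} [AddCommMonoid M] {α β : Type*}
    [Fintype α] [Fintype β] (g : α → β → M) :
    ∑ a, ∑ b, g a b = ∑ b, ∑ a, g a b := Finset.sum_comm

private lemma sum_swap4 {M : Type*} [AddCommMonoid M] {α β γ δ : Type*}
    [Fintype α] [Fintype β] [Fintype γ] [Fintype δ] (g : α → β → γ → δ → M) :
    ∑ a, ∑ b, ∑ c, ∑ e', g a b c e' = ∑ c, ∑ e', ∑ a, ∑ b, g a b c e' := by
  have h1 : ∀ a, ∑ b, ∑ c, ∑ e', g a b c e' = ∑ c, ∑ e', ∑ b, g a b c e' := by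
    intro a
    rw [Finset.sum_comm]
    exact Finset.sum_congr rfl fun c _ => Finset.sum_comm
  simp_rw [h1]
  rw [Finset.sum_comm]
  exact Finset.sum_congr rfl fun c _ => Finset.sum_comm

/-- Transitivity of the containment criterion: if C^{DE} certifies the pencil
relation D → E and C^{EF} certifies E → F, then the matrix C^{DF} with blocks
C^{DF}_{ij} = ∑_{s,t} (C^{DE}_{ij})_{st} C^{EF}_{st} is positive semidefinite
and certifies D → F. -/
theorem containment_criterion_transitive {n d e f : ℕ}
    (D : Fin (n + 1) → Matrix (Fin d) (Fin d) ℝ)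
    (E : Fin (n + 1) → Matrix (Fin e) (Fin e) ℝ)
    (F : Fin (n + 1) → Matrix (Fin f) (Fin f) ℝ)
    (CDE : Matrix (Fin d × Fin e) (Fin d × Fin e) ℝ)
    (CEF : Matrix (Fin e × Fin f) (Fin e × Fin f) ℝ)
    (hCDE : CDE.PosSemidef) (hCEF : CEF.PosSemidef)
    (hDE : ∀ p, E p = Matrix.of fun s t : Fin e =>
      ∑ i : Fin d, ∑ j : Fin d, D p i j * CDE (i, s) (j, t))
    (hEF : ∀ p, F p = Matrix.of fun a b : Fin f =>
      ∑ s : Fin e, ∑ t : Fin e, E p s t * CEF (s, a) (t, b)) :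
    (Matrix.of fun x y : Fin d × Fin f =>
      ∑ s : Fin e, ∑ t : Fin e,
        CDE (x.1, s) (y.1, t) * CEF (s, x.2) (t, y.2)).PosSemidef ∧
    ∀ p, F p = Matrix.of fun a b : Fin f =>
      ∑ i : Fin d, ∑ j : Fin d, D p i j *
        (∑ s : Fin e, ∑ t : Fin e, CDE (i, s) (j, t) * CEF (s, a) (t, b)) := by
  constructor
  · obtain ⟨K, hK⟩ : ∃ B, CDE = B.conjTranspose * B := by
      open scoped MatrixOrder in exact CStarAlgebra.nonneg_iff_eq_star_mul_self.mp hCDE.nonneg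
    obtain ⟨L, hL⟩ : ∃ B, CEF = B.conjTranspose * B := by
      open scoped MatrixOrder in exact CStarAlgebra.nonneg_iff_eq_star_mul_self.mp hCEF.nonneg
    set Q : Matrix ((Fin d × Fin e) × (Fin e × Fin f)) (Fin d × Fin f) ℝ :=
      Matrix.of fun mk ia => ∑ s : Fin e, K mk.1 (ia.1, s) * L mk.2 (s, ia.2) with hQ
    have hc : ∀ p q, CDE p q = ∑ m, K m p * K m q := by
      intro p q
      simp [hK, Matrix.mul_apply, Matrix.conjTranspose_apply]
    have hl : ∀ p q, CEF p q = ∑ k, L k p * L k q := by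
      intro p q
      simp [hL, Matrix.mul_apply, Matrix.conjTranspose_apply]
    have key : (Matrix.of fun x y : Fin d × Fin f =>
      ∑ s : Fin e, ∑ t : Fin e,
        CDE (x.1, s) (y.1, t) * CEF (s, x.2) (t, y.2)) = Q.conjTranspose * Q := by
      ext ⟨i, a⟩ ⟨j, b⟩
      simp only [Matrix.mul_apply, Matrix.conjTranspose_apply, Matrix.of_apply,
        star_trivial, hQ, hc, hl]
      rw [Fintype.sum_prod_type]
      simp only [Finset.sum_mul, Finset.mul_sum]
      rw [sum_swap4, sum_swap2]
      refine Finset.sum_congr rfl fun m _ => Finset.sum_congr rfl fun k _ => ?_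
      rw [sum_swap2]
      refine Finset.sum_congr rfl fun s _ => Finset.sum_congr rfl fun t _ => by ring
    rw [key]
    exact Matrix.posSemidef_conjTranspose_mul_self Q
  · intro p
    rw [hEF p]
    ext a b
    simp only [Matrix.of_apply, hDE p, Finset.sum_mul, Finset.mul_sum]
    rw [sum_swap4]
    refine Finset.sum_congr rfl fun i _ => Finset.sum_congr rfl fun j _ =>
      Finset.sum_congr rfl fun s _ => Finset.sum_congr rfl fun t _ => by ring
end

section
/- Block diagonal reduction of the containment criterion: let A(x) ∈ S_k[x] and B(x) = ⨁_{q=1}^m D^q(x) with D^q(x) ∈ S_{d_q}[x]. Then there exists C = (C_{ij})_{i,j=1}^k ⪰ 0 with B_p = ∑_{i,j} a^p_{ij} C_{ij} for all p = 0,…,n if and only if for each q = 1,…,m there exists C^q = (C^q_{ij})_{i,j=1}^k ⪰ 0 with D^q_p = ∑_{i,j} a^p_{ij} C^q_{ij} for all p = 0,…,n. -/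
open Matrix

theorem my_sum_sigma {ι : Type*} [Fintype ι] {d : ι → Type*} [∀ q, Fintype (d q)]
    (f : (Σ q, d q) → ℝ) : ∑ x, f x = ∑ q, ∑ s, f ⟨q, s⟩ := by
  rw [← Finset.univ_sigma_univ, Finset.sum_sigma]

theorem my_posSemidef_blockDiagonal' {ι : Type*} [Fintype ι] [DecidableEq ι]
    {d : ι → Type*} [∀ q, Fintype (d q)] [∀ q, DecidableEq (d q)]
    {M : ∀ q, Matrix (d q) (d q) ℝ} (h : ∀ q, (M q).PosSemidef) :
    (Matrix.blockDiagonal' M).PosSemidef := by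
  rw [Matrix.posSemidef_iff_dotProduct_mulVec]
  constructor
  · have hM : (fun q => (M q)ᴴ) = M := funext fun q => (h q).1
    rw [Matrix.IsHermitian, Matrix.blockDiagonal'_conjTranspose, hM]
  · intro x
    have key : star x ⬝ᵥ Matrix.blockDiagonal' M *ᵥ x =
        ∑ q, star (fun s => x ⟨q, s⟩) ⬝ᵥ (M q) *ᵥ (fun s => x ⟨q, s⟩) := by
      simp only [dotProduct, Matrix.mulVec, Pi.star_apply, star_trivial]
      rw [my_sum_sigma (fun i => x i * ∑ j, Matrix.blockDiagonal' M i j * x j)]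
      refine Finset.sum_congr rfl fun q _ => Finset.sum_congr rfl fun s _ => ?_
      congr 1
      rw [my_sum_sigma (fun j => Matrix.blockDiagonal' M ⟨q, s⟩ j * x j),
        Finset.sum_eq_single q]
      · refine Finset.sum_congr rfl fun t _ => ?_
        rw [Matrix.blockDiagonal'_apply_eq]
      · intro q' _ hq'
        refine Finset.sum_eq_zero fun t _ => ?_
        rw [Matrix.blockDiagonal'_apply_ne _ _ _ (Ne.symm hq'), zero_mul]
      · simp
    rw [key]
    exact Finset.sum_nonneg fun q _ => (h q).dotProduct_mulVec_nonneg _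

/-- Block diagonal reduction of the containment criterion: for
B(x) = ⨁_q D^q(x), the system for (A, B) is feasible iff the system for
(A, D^q) is feasible for each q. -/
theorem containment_criterion_block_diagonal {n k m : ℕ} (d : Fin m → ℕ)
    (A : Fin (n + 1) → Matrix (Fin k) (Fin k) ℝ)
    (D : (q : Fin m) → Fin (n + 1) → Matrix (Fin (d q)) (Fin (d q)) ℝ) :
    (∃ C : Matrix (Fin k × ((q : Fin m) × Fin (d q)))
        (Fin k × ((q : Fin m) × Fin (d q))) ℝ,
      C.PosSemidef ∧ ∀ p, Matrix.blockDiagonal' (fun q => D q p) =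
        Matrix.of fun s t : (q : Fin m) × Fin (d q) =>
          ∑ i : Fin k, ∑ j : Fin k, A p i j * C (i, s) (j, t)) ↔
    (∀ q : Fin m, ∃ Cq : Matrix (Fin k × Fin (d q)) (Fin k × Fin (d q)) ℝ,
      Cq.PosSemidef ∧ ∀ p, D q p =
        Matrix.of fun s t : Fin (d q) =>
          ∑ i : Fin k, ∑ j : Fin k, A p i j * Cq (i, s) (j, t)) := by
  constructor
  · rintro ⟨C, hC, hB⟩ q
    refine ⟨C.submatrix (fun is => (is.1, ⟨q, is.2⟩)) (fun is => (is.1, ⟨q, is.2⟩)),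
      hC.submatrix _, fun p => ?_⟩
    ext s t
    have := congrFun (congrFun (hB p) ⟨q, s⟩) ⟨q, t⟩
    rw [Matrix.blockDiagonal'_apply_eq] at this
    simpa using this
  · intro h
    choose Cq hCqpsd hCqeq using h
    refine ⟨(Matrix.blockDiagonal' Cq).submatrix
      (fun is => ⟨is.2.1, (is.1, is.2.2)⟩) (fun is => ⟨is.2.1, (is.1, is.2.2)⟩),
      (my_posSemidef_blockDiagonal' hCqpsd).submatrix _, fun p => ?_⟩
    ext ⟨q, s⟩ ⟨q', t⟩
    rcases eq_or_ne q q' with rfl | hqq'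
    · rw [Matrix.blockDiagonal'_apply_eq]
      have := congrFun (congrFun (hCqeq q p) s) t
      simp only [Matrix.of_apply] at this ⊢
      rw [this]
      refine Finset.sum_congr rfl fun i _ => Finset.sum_congr rfl fun j _ => ?_
      simp [Matrix.blockDiagonal'_apply_eq]
    · rw [Matrix.blockDiagonal'_apply_ne _ _ _ hqq']
      simp only [Matrix.of_apply, Matrix.submatrix_apply]
      refine (Finset.sum_eq_zero fun i _ => Finset.sum_eq_zero fun j _ => ?_).symm
      rw [Matrix.blockDiagonal'_apply_ne _ _ _ hqq', mul_zero]
end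

section
/- Exactness for axis-aligned ellipsoids: let A(x) = I_{n+1} + ∑_{p=1}^n (x_p/a_p)(E_{p,n+1} + E_{n+1,p}) and B(x) = I_{n+1} + ∑_{p=1}^n (x_p/b_p)(E_{p,n+1} + E_{n+1,p}) with a_p, b_p > 0, and suppose a_p ≤ b_p for all p (equivalently S_A ⊆ S_B). Then the (n+1)²×(n+1)² block matrix C defined by (C_{ij})_{st} = 1 if i=j=s=t; = a_j/b_j if i=s=n+1, j=t≤n; = a_i/b_i if i=s≤n, j=t=n+1; = (a_i a_j)/(b_i b_j) if i=s≤n, j=t≤n, i≠j; and 0 otherwise, is positive semidefinite, satisfies ∑_{i=1}^{n+1} C_{ii} = I_{n+1}, and B_p = ∑_{i,j=1}^{n+1} a^p_{ij} C_{ij} for all p = 1,…,n. -/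
/-- Coefficient matrix A_p = (1/a_p)(E_{p,n+1} + E_{n+1,p}) of the normal form
of an axis-aligned ellipsoid with semi-axes a. -/
noncomputable def ellCoeff {n : ℕ} (a : Fin n → ℝ) (p : Fin n) :
    Matrix (Fin (n + 1)) (Fin (n + 1)) ℝ :=
  (a p)⁻¹ • (Matrix.single p.castSucc (Fin.last n) 1 +
    Matrix.single (Fin.last n) p.castSucc 1)

/-- The explicit certificate matrix C from Lemma 4.10 for the containment of
one axis-aligned ellipsoid in another. -/
noncomputable def ellCert {n : ℕ} (a b : Fin n → ℝ) :
    Matrix (Fin (n + 1) × Fin (n + 1)) (Fin (n + 1) × Fin (n + 1)) ℝ :=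
  Matrix.of fun x y =>
    if x.1 = y.1 ∧ y.1 = x.2 ∧ x.2 = y.2 then 1
    else if h : x.1 = Fin.last n ∧ x.2 = Fin.last n ∧ y.1 = y.2 ∧
        y.1 ≠ Fin.last n then
      a (y.1.castPred h.2.2.2) / b (y.1.castPred h.2.2.2)
    else if h : y.1 = Fin.last n ∧ y.2 = Fin.last n ∧ x.1 = x.2 ∧
        x.1 ≠ Fin.last n then
      a (x.1.castPred h.2.2.2) / b (x.1.castPred h.2.2.2)
    else if h : x.1 = x.2 ∧ y.1 = y.2 ∧ x.1 ≠ Fin.last n ∧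
        y.1 ≠ Fin.last n ∧ x.1 ≠ y.1 then
      (a (x.1.castPred h.2.2.1) * a (y.1.castPred h.2.2.2.1)) /
        (b (x.1.castPred h.2.2.1) * b (y.1.castPred h.2.2.2.1))
    else 0

noncomputable def ellVec {n : ℕ} (a b : Fin n → ℝ) : Fin (n + 1) × Fin (n + 1) → ℝ :=
  fun x => if h : x.1 = x.2 then
    (if h2 : x.1 = Fin.last n then 1 else a (x.1.castPred h2) / b (x.1.castPred h2)) else 0

noncomputable def ellDiag {n : ℕ} (a b : Fin n → ℝ) : Fin (n + 1) × Fin (n + 1) → ℝ :=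
  fun x => if h : x.1 = x.2 ∧ x.1 ≠ Fin.last n then
    1 - (a (x.1.castPred h.2) / b (x.1.castPred h.2))^2 else 0

open Matrix in
lemma psd_vecMulVec {ι : Type*} [Fintype ι] (v : ι → ℝ) :
    (Matrix.vecMulVec v v).PosSemidef := by
  simpa using Matrix.posSemidef_vecMulVec_self_star v

lemma ellCert_eq {n : ℕ} (a b : Fin n → ℝ) :
    ellCert a b = Matrix.vecMulVec (ellVec a b) (ellVec a b)
      + Matrix.diagonal (ellDiag a b) := by
  ext ⟨i, j⟩ ⟨s, t⟩
  by_cases hij : i = j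
  · subst hij
    by_cases hst : s = t
    · subst hst
      by_cases his : i = s
      · subst his
        by_cases hil : i = Fin.last n
        · simp [ellCert, ellVec, ellDiag, hil, Matrix.vecMulVec, Matrix.diagonal]
        · simp [ellCert, ellVec, ellDiag, hil, Matrix.vecMulVec, Matrix.diagonal]
          ring
      · by_cases hil : i = Fin.last n
        · by_cases hsl : s = Fin.last n
          · exact absurd (hil.trans hsl.symm) his
          · simp [ellCert, ellVec, ellDiag, hil, hsl, his, Matrix.vecMulVec, Matrix.diagonal,
              Prod.ext_iff]
        · by_cases hsl : s = Fin.last n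
          · simp [ellCert, ellVec, ellDiag, hil, hsl, his, Matrix.vecMulVec, Matrix.diagonal,
              Prod.ext_iff]
          · simp [ellCert, ellVec, ellDiag, hil, hsl, his, Matrix.vecMulVec, Matrix.diagonal,
              Prod.ext_iff, div_mul_div_comm]
    · have h1 : ¬ (i = s ∧ s = i ∧ i = t) := fun h => hst (h.2.1.trans h.2.2)
      have h2 : ¬ (s = Fin.last n ∧ t = Fin.last n ∧ ¬ i = Fin.last n) :=
        fun h => hst (h.1.trans h.2.1.symm)
      have h3 : ¬ (i = s ∧ i = t) := fun h => hst (h.1.symm.trans h.2)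
      simp [ellCert, ellVec, ellDiag, hst, Matrix.vecMulVec, Matrix.diagonal, Prod.ext_iff,
        h1, h2, h3]
  · have h1 : ¬ (i = s ∧ s = j ∧ j = t) := fun h => hij (h.1.trans h.2.1)
    have h2 : ¬ (i = Fin.last n ∧ j = Fin.last n ∧ s = t ∧ ¬ s = Fin.last n) :=
      fun h => hij (h.1.trans h.2.1.symm)
    simp [ellCert, ellVec, ellDiag, hij, Matrix.vecMulVec, Matrix.diagonal, Prod.ext_iff,
      h1, h2]

lemma ellCert_diagEntry {n : ℕ} (a b : Fin n → ℝ) (i s t : Fin (n + 1)) :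
    ellCert a b (i, s) (i, t) = if i = s ∧ s = t then 1 else 0 := by
  simp only [ellCert, Matrix.of_apply]
  by_cases h : i = s ∧ s = t
  · rw [if_pos ⟨trivial, h.1, h.2⟩, if_pos h]
  · rw [if_neg (fun hc => h ⟨hc.2.1, hc.2.2⟩), dif_neg (fun hc => hc.2.2.2 hc.1),
      dif_neg (fun hc => hc.2.2.2 hc.1), dif_neg (fun hc => hc.2.2.2.2 rfl), if_neg h]

lemma ellCert_left {n : ℕ} (a b : Fin n → ℝ) (p : Fin n) (s t : Fin (n + 1)) :
    ellCert a b (p.castSucc, s) (Fin.last n, t) =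
      if s = p.castSucc ∧ t = Fin.last n then a p / b p else 0 := by
  have hpl : p.castSucc ≠ Fin.last n := (Fin.castSucc_lt_last p).ne
  simp only [ellCert, Matrix.of_apply]
  rw [if_neg (fun h => hpl h.1), dif_neg (fun h => hpl h.1)]
  by_cases h : s = p.castSucc ∧ t = Fin.last n
  · rw [dif_pos ⟨trivial, h.2, h.1.symm, hpl⟩, if_pos h]
    simp
  · rw [dif_neg (fun hc => h ⟨hc.2.2.1.symm, hc.2.1⟩),
      dif_neg (fun hc => hc.2.2.2.1 rfl), if_neg h]

lemma ellCert_right {n : ℕ} (a b : Fin n → ℝ) (p : Fin n) (s t : Fin (n + 1)) :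
    ellCert a b (Fin.last n, s) (p.castSucc, t) =
      if s = Fin.last n ∧ t = p.castSucc then a p / b p else 0 := by
  have hpl : p.castSucc ≠ Fin.last n := (Fin.castSucc_lt_last p).ne
  simp only [ellCert, Matrix.of_apply]
  rw [if_neg (fun h => hpl h.1.symm)]
  by_cases h : s = Fin.last n ∧ t = p.castSucc
  · rw [dif_pos ⟨trivial, h.1, h.2.symm, hpl⟩, if_pos h]
    simp
  · rw [dif_neg (fun hc => h ⟨hc.2.1, hc.2.2.1.symm⟩),
      dif_neg (fun hc => hpl hc.1), dif_neg (fun hc => hc.2.2.1 rfl), if_neg h]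

/-- Exactness of the containment criterion for axis-aligned ellipsoids: if
a_p ≤ b_p for all p, the explicit matrix `ellCert a b` is psd, its diagonal
blocks sum to the identity, and B_p = ∑_{i,j} a^p_{ij} C_{ij} for all p. -/
theorem ellipsoid_containment_exact {n : ℕ} (a b : Fin n → ℝ)
    (ha : ∀ p, 0 < a p) (hb : ∀ p, 0 < b p) (hab : ∀ p, a p ≤ b p) :
    (ellCert a b).PosSemidef ∧
    (∀ s t : Fin (n + 1), (∑ i : Fin (n + 1), ellCert a b (i, s) (i, t)) =
      (1 : Matrix (Fin (n + 1)) (Fin (n + 1)) ℝ) s t) ∧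
    (∀ p : Fin n, ellCoeff b p = Matrix.of fun s t : Fin (n + 1) =>
      ∑ i : Fin (n + 1), ∑ j : Fin (n + 1),
        ellCoeff a p i j * ellCert a b (i, s) (j, t)) := by
  refine ⟨?_, ?_, ?_⟩
  · rw [ellCert_eq]
    refine (psd_vecMulVec _).add (Matrix.posSemidef_diagonal_iff.mpr ?_)
    intro x
    unfold ellDiag
    split_ifs with h
    · have h1 := ha (x.1.castPred h.2)
      have h2 := hb (x.1.castPred h.2)
      have h3 := hab (x.1.castPred h.2)
      have hle : a (x.1.castPred h.2) / b (x.1.castPred h.2) ≤ 1 := by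
        rw [div_le_one h2]; exact h3
      have hge : 0 ≤ a (x.1.castPred h.2) / b (x.1.castPred h.2) :=
        div_nonneg h1.le h2.le
      nlinarith
    · exact le_refl 0
  · intro s t
    simp only [ellCert_diagEntry]
    by_cases hst : s = t
    · subst hst
      simp [Matrix.one_apply]
    · simp [hst, Matrix.one_apply]
  · intro p
    have hsum : ∀ (α β : Fin (n + 1)) (g : Fin (n + 1) → Fin (n + 1) → ℝ),
        (∑ i : Fin (n + 1), ∑ j : Fin (n + 1),
          Matrix.single α β (1 : ℝ) i j * g i j) = g α β := by
      intro α β g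
      rw [Finset.sum_eq_single α]
      · rw [Finset.sum_eq_single β]
        · simp [Matrix.single]
        · intro j _ hj
          simp [Matrix.single, Ne.symm hj]
        · simp
      · intro i _ hi
        simp [Matrix.single, Ne.symm hi]
      · simp
    ext s t
    have expand : ∀ s t : Fin (n + 1),
        (∑ i : Fin (n + 1), ∑ j : Fin (n + 1),
          ellCoeff a p i j * ellCert a b (i, s) (j, t)) =
        (a p)⁻¹ * (ellCert a b (p.castSucc, s) (Fin.last n, t)
          + ellCert a b (Fin.last n, s) (p.castSucc, t)) := by
      intro s t
      simp only [ellCoeff, Matrix.smul_apply, Matrix.add_apply, smul_eq_mul, add_mul, mul_assoc,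
        Finset.sum_add_distrib, ← Finset.mul_sum]
      rw [hsum p.castSucc (Fin.last n) (fun i j => ellCert a b (i, s) (j, t)),
        hsum (Fin.last n) p.castSucc (fun i j => ellCert a b (i, s) (j, t))]
    have hpl : p.castSucc ≠ Fin.last n := (Fin.castSucc_lt_last p).ne
    have e1 : (p.castSucc = s ∧ Fin.last n = t) ↔ (s = p.castSucc ∧ t = Fin.last n) :=
      ⟨fun h => ⟨h.1.symm, h.2.symm⟩, fun h => ⟨h.1.symm, h.2.symm⟩⟩
    have e2 : (Fin.last n = s ∧ p.castSucc = t) ↔ (s = Fin.last n ∧ t = p.castSucc) :=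
      ⟨fun h => ⟨h.1.symm, h.2.symm⟩, fun h => ⟨h.1.symm, h.2.symm⟩⟩
    rw [Matrix.of_apply, expand s t, ellCert_left, ellCert_right]
    simp only [ellCoeff, Matrix.smul_apply, Matrix.add_apply, smul_eq_mul,
      Matrix.single, Matrix.of_apply, e1, e2]
    have hap := (ha p).ne'
    have hbp := (hb p).ne'
    by_cases hs1 : s = p.castSucc ∧ t = Fin.last n
    · by_cases hs2 : s = Fin.last n ∧ t = p.castSucc
      · exact absurd (hs1.1.symm.trans hs2.1) hpl
      · rw [if_pos hs1, if_neg hs2, if_pos hs1, if_neg hs2]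
        field_simp
        ring
    · by_cases hs2 : s = Fin.last n ∧ t = p.castSucc
      · rw [if_neg hs1, if_pos hs2, if_neg hs1, if_pos hs2]
        field_simp
        ring
      · rw [if_neg hs1, if_neg hs2, if_neg hs1, if_neg hs2]
        simp
end

section
/- Exactness for a ball inside a polyhedron: let S_A be the ball of radius r > 0 centered at the origin, given by the monic pencil A(x) = I_{n+1} + ∑_{p=1}^n (x_p/r)(E_{p,n+1}+E_{n+1,p}), and let S_B = {x : 1 + ∑_{p} b_{s,p} x_p ≥ 0 for s = 1,…,l} be a polyhedron (diagonal monic pencil B(x)) containing S_A. Then the (n+1)l × (n+1)l block matrix C defined by (C_{i,j})_{s,s} = r² b_{s,i}²/2 for i=j<n+1; = 1 − (r²/2)∑_p b_{s,p}² for i=j=n+1; = r² b_{s,i} b_{s,j}/2 for i,j < n+1, i≠j; = r b_{s,j}/2 for i=n+1, j<n+1; = r b_{s,i}/2 for j=n+1, i<n+1; and all off-diagonal entries (s≠t) zero, is positive semidefinite, has ∑_i C_{ii} = I_l, and satisfies B_p = ∑_{i,j} a^p_{ij} C_{ij} for all p. -/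
open Matrix


/-- The explicit certificate matrix from Lemma 4.12 for the containment of a
ball of radius r in the polyhedron {x : ∀ s, 1 + b_s·x ≥ 0}. -/
noncomputable def ballCert {n l : ℕ} (r : ℝ) (b : Fin l → Fin n → ℝ) :
    Matrix (Fin (n + 1) × Fin l) (Fin (n + 1) × Fin l) ℝ :=
  Matrix.of fun x y =>
    if x.2 = y.2 then
      (if h : x.1 = y.1 ∧ x.1 ≠ Fin.last n then
        r ^ 2 * (b x.2 (x.1.castPred h.2)) ^ 2 / 2
      else if x.1 = y.1 ∧ x.1 = Fin.last n then
        1 - r ^ 2 / 2 * ∑ p : Fin n, (b x.2 p) ^ 2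
      else if h : x.1 ≠ Fin.last n ∧ y.1 ≠ Fin.last n ∧ x.1 ≠ y.1 then
        r ^ 2 * b x.2 (x.1.castPred h.1) * b x.2 (y.1.castPred h.2.1) / 2
      else if h : x.1 = Fin.last n ∧ y.1 ≠ Fin.last n then
        r * b x.2 (y.1.castPred h.2) / 2
      else if h : y.1 = Fin.last n ∧ x.1 ≠ Fin.last n then
        r * b x.2 (x.1.castPred h.2) / 2
      else 0)
    else 0

noncomputable def gvec {n l : ℕ} (r : ℝ) (b : Fin l → Fin n → ℝ) (s : Fin l)
    (i : Fin (n + 1)) : ℝ :=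
  if h : i = Fin.last n then 1 else r * b s (i.castPred h)

lemma gvec_last {n l : ℕ} (r : ℝ) (b : Fin l → Fin n → ℝ) (s : Fin l) :
    gvec r b s (Fin.last n) = 1 := by simp [gvec]

lemma gvec_castSucc {n l : ℕ} (r : ℝ) (b : Fin l → Fin n → ℝ) (s : Fin l) (p : Fin n) :
    gvec r b s p.castSucc = r * b s p := by
  simp [gvec, (Fin.castSucc_lt_last p).ne, Fin.castPred_castSucc]

lemma ballCert_eq {n l : ℕ} (r : ℝ) (b : Fin l → Fin n → ℝ)
    (i j : Fin (n + 1)) (s t : Fin l) :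
    ballCert r b (i, s) (j, t) =
      if s = t then gvec r b s i * gvec r b s j / 2 +
        (if i = Fin.last n ∧ j = Fin.last n then
          (1 - r ^ 2 * ∑ p : Fin n, (b s p) ^ 2) / 2 else 0)
      else 0 := by
  rcases eq_or_ne s t with hst | hst
  · subst hst
    rcases eq_or_ne i (Fin.last n) with hi | hi <;>
      rcases eq_or_ne j (Fin.last n) with hj | hj
    · subst hi; subst hj
      simp [ballCert, gvec]
      ring
    · subst hi
      simp [ballCert, gvec, hj, (Ne.symm hj)]
    · subst hj
      simp [ballCert, gvec, hi, (Ne.symm hi)]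
    · rcases eq_or_ne i j with hij | hij
      · subst hij
        simp [ballCert, gvec, hi]
        ring
      · simp [ballCert, gvec, hi, hj, hij]
        ring
  · simp [ballCert, hst]


lemma stdquad {n : ℕ} (a c : Fin n) (z : Fin n → ℝ) :
    z ⬝ᵥ (Matrix.single a c (1 : ℝ) *ᵥ z) = z a * z c := by
  simp [dotProduct, Matrix.mulVec, Matrix.single, ite_and,
    Finset.mul_sum, mul_ite, mul_zero, mul_one]

lemma pencil_psd {n : ℕ} (r : ℝ) (hr : 0 < r) (x : Fin n → ℝ)
    (hx : ∑ p : Fin n, (x p) ^ 2 ≤ r ^ 2) :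
    ((1 : Matrix (Fin (n + 1)) (Fin (n + 1)) ℝ) +
        ∑ p : Fin n, (x p / r) •
          (Matrix.single p.castSucc (Fin.last n) (1 : ℝ) +
            Matrix.single (Fin.last n) p.castSucc 1)).PosSemidef := by
  have std_trans : ∀ a c : Fin (n + 1),
      (Matrix.single a c (1 : ℝ))ᴴ = Matrix.single c a 1 := by
    intro a c; ext i j
    simp [Matrix.conjTranspose_apply, Matrix.single, and_comm]
  have herm : ∀ p : Fin n, ((x p / r) •
      (Matrix.single p.castSucc (Fin.last n) (1 : ℝ) +
        Matrix.single (Fin.last n) p.castSucc 1))ᴴ = (x p / r) •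
      (Matrix.single p.castSucc (Fin.last n) (1 : ℝ) +
        Matrix.single (Fin.last n) p.castSucc 1) := by
    intro p
    rw [Matrix.conjTranspose_smul, Matrix.conjTranspose_add, std_trans, std_trans,
      star_trivial]
    rw [add_comm (Matrix.single (Fin.last n) p.castSucc (1:ℝ))]
  rw [Matrix.posSemidef_iff_dotProduct_mulVec]
  constructor
  · refine Matrix.IsHermitian.add Matrix.isHermitian_one ?_
    show _ᴴ = _
    rw [Matrix.conjTranspose_sum]
    exact Finset.sum_congr rfl fun p _ => herm p
  · intro z
    simp only [star_trivial]
    have quad : dotProduct z (((1 : Matrix (Fin (n + 1)) (Fin (n + 1)) ℝ) +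
        ∑ p : Fin n, (x p / r) •
          (Matrix.single p.castSucc (Fin.last n) (1 : ℝ) +
            Matrix.single (Fin.last n) p.castSucc 1)).mulVec z) =
        (∑ i, z i ^ 2) + 2 * z (Fin.last n) * ∑ p : Fin n, (x p / r) * z p.castSucc := by
      have hsum : (∑ p : Fin n, (x p / r) •
          (Matrix.single p.castSucc (Fin.last n) (1 : ℝ) +
            Matrix.single (Fin.last n) p.castSucc 1)) *ᵥ z =
          ∑ p : Fin n, ((x p / r) •
          (Matrix.single p.castSucc (Fin.last n) (1 : ℝ) +
            Matrix.single (Fin.last n) p.castSucc 1)) *ᵥ z := by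
        ext i
        simp only [Matrix.mulVec, dotProduct, Finset.sum_apply,
          Matrix.sum_apply, Finset.sum_mul]
        rw [Finset.sum_comm]
      have hdsum : z ⬝ᵥ (∑ p : Fin n, ((x p / r) •
          (Matrix.single p.castSucc (Fin.last n) (1 : ℝ) +
            Matrix.single (Fin.last n) p.castSucc 1)) *ᵥ z) =
          ∑ p : Fin n, z ⬝ᵥ (((x p / r) •
          (Matrix.single p.castSucc (Fin.last n) (1 : ℝ) +
            Matrix.single (Fin.last n) p.castSucc 1)) *ᵥ z) := by
        simp only [dotProduct, Finset.sum_apply, Finset.mul_sum]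
        rw [Finset.sum_comm]
      rw [Matrix.add_mulVec, dotProduct_add, Matrix.one_mulVec, hsum, hdsum]
      have h2 : ∀ p : Fin n, dotProduct z (((x p / r) •
          (Matrix.single p.castSucc (Fin.last n) (1 : ℝ) +
            Matrix.single (Fin.last n) p.castSucc 1)).mulVec z) =
          2 * z (Fin.last n) * ((x p / r) * z p.castSucc) := by
        intro p
        rw [Matrix.smul_mulVec, dotProduct_smul, Matrix.add_mulVec,
          dotProduct_add, stdquad, stdquad]
        simp only [smul_eq_mul]
        ring
      rw [Finset.sum_congr rfl fun p _ => h2 p, ← Finset.mul_sum]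
      congr 1
      simp [dotProduct, sq]
    rw [quad]
    set zL := z (Fin.last n) with hzL
    set T := ∑ p : Fin n, (x p / r) * z p.castSucc with hT
    have hsplit : (∑ i, z i ^ 2) = (∑ p : Fin n, z p.castSucc ^ 2) + zL ^ 2 :=
      Fin.sum_univ_castSucc _
    have cs := Finset.sum_mul_sq_le_sq_mul_sq Finset.univ (fun p => x p / r)
      (fun p => z p.castSucc)
    have hU : (0 : ℝ) ≤ ∑ p : Fin n, z p.castSucc ^ 2 := by positivity
    have h1 : ∑ p : Fin n, (x p / r) ^ 2 ≤ 1 := by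
      have he : ∑ p : Fin n, (x p / r) ^ 2 = (∑ p : Fin n, x p ^ 2) / r ^ 2 := by
        simp [div_pow, Finset.sum_div]
      rw [he, div_le_one (by positivity)]
      exact hx
    have h2 : T ^ 2 ≤ ∑ p : Fin n, z p.castSucc ^ 2 := by
      calc T ^ 2 ≤ (∑ p : Fin n, (x p / r) ^ 2) * ∑ p : Fin n, z p.castSucc ^ 2 := cs
        _ ≤ 1 * ∑ p : Fin n, z p.castSucc ^ 2 := by
            exact mul_le_mul_of_nonneg_right h1 hU
        _ = _ := one_mul _
    rw [hsplit]
    nlinarith [sq_nonneg (zL + T)]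

noncomputable def certM {n l : ℕ} (r : ℝ) (b : Fin l → Fin n → ℝ) :
    Matrix (Fin l) (Fin (n + 1) × Fin l) ℝ :=
  Matrix.of fun u y => if u = y.2 then gvec r b u y.1 / Real.sqrt 2 else 0

noncomputable def certD {n l : ℕ} (r : ℝ) (b : Fin l → Fin n → ℝ) :
    (Fin (n + 1) × Fin l) → ℝ :=
  fun y => if y.1 = Fin.last n then (1 - r ^ 2 * ∑ p : Fin n, (b y.2 p) ^ 2) / 2 else 0

lemma ballCert_decomp {n l : ℕ} (r : ℝ) (b : Fin l → Fin n → ℝ) :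
    ballCert r b = (certM r b)ᴴ * certM r b + Matrix.diagonal (certD r b) := by
  ext ⟨i, s⟩ ⟨j, t⟩
  rw [ballCert_eq, Matrix.add_apply, Matrix.diagonal_apply, Matrix.mul_apply]
  simp only [certM, certD, Matrix.conjTranspose_apply, Matrix.of_apply, star_trivial]
  rcases eq_or_ne s t with hst | hst
  · subst hst
    rw [if_pos rfl]
    have hsum : ∑ u : Fin l, (if u = s then gvec r b u i / Real.sqrt 2 else 0) *
        (if u = s then gvec r b u j / Real.sqrt 2 else 0) =
        gvec r b s i * gvec r b s j / 2 := by
      rw [Finset.sum_eq_single s]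
      · rw [if_pos rfl, if_pos rfl, div_mul_div_comm,
          Real.mul_self_sqrt (by norm_num : (0:ℝ) ≤ 2)]
      · intro u _ hu; rw [if_neg hu, zero_mul]
      · intro h; exact absurd (Finset.mem_univ s) h
    rw [hsum]
    congr 1
    rcases eq_or_ne i j with hij | hij
    · subst hij; simp [Prod.ext_iff]
    · rw [if_neg (fun h => hij (h.1.trans h.2.symm)),
        if_neg (fun h : (i, s) = (j, s) => hij (congrArg Prod.fst h))]
  · rw [if_neg hst]
    have hz : ∀ u ∈ Finset.univ, (if u = s then gvec r b u i / Real.sqrt 2 else 0) *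
        (if u = t then gvec r b u j / Real.sqrt 2 else 0) = 0 := by
      intro u _
      rcases eq_or_ne u s with h | h
      · rw [if_neg (fun h' => hst (h ▸ h' : s = t)), mul_zero]
      · rw [if_neg h, zero_mul]
    rw [Finset.sum_eq_zero hz,
      if_neg (fun h : (i, s) = (j, t) => hst (congrArg Prod.snd h))]
    norm_num

/-- Exactness of the containment criterion for a ball inside a polyhedron:
if the ball S_A of radius r (in normal form) is contained in the polyhedron
S_B, then the explicit matrix `ballCert r b` is psd, its diagonal blocks sum
to the identity, and B_p = ∑_{i,j} a^p_{ij} C_{ij} for all p. -/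
theorem ball_in_polyhedron_exact {n l : ℕ} (r : ℝ) (hr : 0 < r)
    (b : Fin l → Fin n → ℝ)
    (hsub : {x : Fin n → ℝ | ((1 : Matrix (Fin (n + 1)) (Fin (n + 1)) ℝ) +
        ∑ p : Fin n, (x p / r) •
          (Matrix.single p.castSucc (Fin.last n) (1 : ℝ) +
            Matrix.single (Fin.last n) p.castSucc 1)).PosSemidef} ⊆
      {x : Fin n → ℝ | ∀ s : Fin l, 0 ≤ 1 + ∑ p : Fin n, b s p * x p}) :
    (ballCert r b).PosSemidef ∧
    (∀ s t : Fin l, (∑ i : Fin (n + 1), ballCert r b (i, s) (i, t)) =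
      (1 : Matrix (Fin l) (Fin l) ℝ) s t) ∧
    (∀ p : Fin n, Matrix.diagonal (fun s : Fin l => b s p) =
      Matrix.of fun s t : Fin l =>
        ∑ i : Fin (n + 1), ∑ j : Fin (n + 1),
          ((r⁻¹ • (Matrix.single p.castSucc (Fin.last n) (1 : ℝ) +
            Matrix.single (Fin.last n) p.castSucc 1) :
              Matrix (Fin (n + 1)) (Fin (n + 1)) ℝ)) i j *
            ballCert r b (i, s) (j, t)) := by
  have hb : ∀ s : Fin l, r ^ 2 * ∑ p : Fin n, b s p ^ 2 ≤ 1 := by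
    intro s
    by_cases h0 : (∑ p : Fin n, b s p ^ 2) = 0
    · rw [h0]; norm_num
    · have hBpos : 0 < ∑ p : Fin n, b s p ^ 2 :=
        lt_of_le_of_ne (by positivity) (Ne.symm h0)
      set B := ∑ p : Fin n, b s p ^ 2 with hBdef
      set x : Fin n → ℝ := fun p => -(r * b s p) / Real.sqrt B with hxdef
      have hsq : Real.sqrt B ^ 2 = B := Real.sq_sqrt hBpos.le
      have hsPos : 0 < Real.sqrt B := Real.sqrt_pos.mpr hBpos
      have hx : ∑ p : Fin n, x p ^ 2 ≤ r ^ 2 := by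
        have hxp : ∀ p : Fin n, x p ^ 2 = r ^ 2 * b s p ^ 2 / B := by
          intro p
          rw [hxdef]
          rw [div_pow, neg_pow, hsq]
          ring
        rw [Finset.sum_congr rfl fun p _ => hxp p, ← Finset.sum_div, ← Finset.mul_sum,
          ← hBdef, mul_div_assoc, div_self h0, mul_one]
      have hmem := hsub (pencil_psd r hr x hx) s
      have hsum : ∑ p : Fin n, b s p * x p = -(r * Real.sqrt B) := by
        have h1 : ∀ p : Fin n, b s p * x p = -(r / Real.sqrt B) * b s p ^ 2 := by
          intro p; rw [hxdef]; ring
        rw [Finset.sum_congr rfl fun p _ => h1 p, ← Finset.mul_sum, ← hBdef]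
        field_simp
        rw [hsq]
      rw [hsum] at hmem
      have key : r * Real.sqrt B ≤ 1 := by linarith
      nlinarith [mul_nonneg hr.le hsPos.le]
  refine ⟨?_, ?_, ?_⟩
  · rw [ballCert_decomp]
    refine (Matrix.posSemidef_conjTranspose_mul_self _).add (Matrix.PosSemidef.diagonal ?_)
    intro y
    simp only [certD, Pi.zero_apply]
    split
    · linarith [hb y.2]
    · exact le_refl 0
  · intro s t
    rcases eq_or_ne s t with hst | hst
    · subst hst
      simp only [ballCert_eq, if_true, eq_self_iff_true]
      rw [Finset.sum_add_distrib]
      have h1 : (∑ i : Fin (n + 1), gvec r b s i * gvec r b s i / 2) =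
          (r ^ 2 * ∑ p : Fin n, b s p ^ 2 + 1) / 2 := by
        rw [Fin.sum_univ_castSucc]
        simp only [gvec_castSucc, gvec_last]
        have h2 : ∀ p : Fin n, r * b s p * (r * b s p) / 2 = r ^ 2 / 2 * b s p ^ 2 :=
          fun p => by ring
        rw [Finset.sum_congr rfl fun p _ => h2 p, ← Finset.mul_sum]
        ring
      have h2 : (∑ i : Fin (n + 1), if i = Fin.last n ∧ i = Fin.last n then
          (1 - r ^ 2 * ∑ p : Fin n, b s p ^ 2) / 2 else 0) =
          (1 - r ^ 2 * ∑ p : Fin n, b s p ^ 2) / 2 := by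
        simp
      rw [h1, h2, Matrix.one_apply_eq]
      ring
    · simp [ballCert_eq, hst, Matrix.one_apply_ne hst]
  · intro p
    have hpl : p.castSucc ≠ Fin.last n := (Fin.castSucc_lt_last p).ne
    ext s t
    rw [Matrix.of_apply, Matrix.diagonal_apply]
    have hsummand : ∀ i j : Fin (n + 1),
        ((r⁻¹ • (Matrix.single p.castSucc (Fin.last n) (1 : ℝ) +
            Matrix.single (Fin.last n) p.castSucc 1) :
              Matrix (Fin (n + 1)) (Fin (n + 1)) ℝ)) i j *
            ballCert r b (i, s) (j, t) =
          (if p.castSucc = i ∧ Fin.last n = j then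
            r⁻¹ * ballCert r b (i, s) (j, t) else 0) +
          (if Fin.last n = i ∧ p.castSucc = j then
            r⁻¹ * ballCert r b (i, s) (j, t) else 0) := by
      intro i j
      simp only [Matrix.smul_apply, Matrix.add_apply, Matrix.single,
        Matrix.of_apply, smul_eq_mul]
      split_ifs <;> ring
    have hdouble : ∀ (a c : Fin (n + 1)) (f : Fin (n + 1) → Fin (n + 1) → ℝ),
        (∑ i : Fin (n + 1), ∑ j : Fin (n + 1), if a = i ∧ c = j then f i j else 0)
          = f a c := by
      intro a c f
      have h1 : ∀ i, (∑ j : Fin (n + 1), if a = i ∧ c = j then f i j else 0)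
          = if a = i then f i c else 0 := by
        intro i
        rcases eq_or_ne a i with h | h
        · subst h; simp [Finset.sum_ite_eq]
        · simp [h]
      rw [Finset.sum_congr rfl fun i _ => h1 i]
      simp [Finset.sum_ite_eq]
    simp only [hsummand, Finset.sum_add_distrib]
    rw [hdouble, hdouble, ballCert_eq, ballCert_eq]
    rcases eq_or_ne s t with hst | hst
    · subst hst
      simp only [if_pos rfl, gvec_castSucc, gvec_last, hpl, and_false, false_and,
        and_true, if_neg hpl, if_false, add_zero]
      field_simp
      rw [if_pos trivial, if_pos trivial]
      ring
    · simp [hst]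
end

section
/- Inexactness example: let A(x) = I_3 + x_1(E_{1,3}+E_{3,1}) + x_2(E_{2,3}+E_{3,2}) ∈ S_3[x]. There is no positive semidefinite 6×6 matrix C = (C_{ij})_{i,j=1}^3 with 2×2 blocks satisfying I_2 = ∑_{i=1}^3 C_{ii}, diag(1,−1) = C_{13} + C_{31}, and offdiag(1,1) = C_{23} + C_{32}, even though S_A equals the unit disc S_B for B(x) = I_2 + x_1 diag(1,−1) + x_2 (E_{12}+E_{21}). -/
/-- Inexactness of the containment criterion (Example of Section 5.1): for the
pencil A(x) = I₃ + x₁(E₁₃+E₃₁) + x₂(E₂₃+E₃₂) of the unit disc and the pencil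
B(x) = I₂ + x₁ diag(1,−1) + x₂(E₁₂+E₂₁) of the same disc, there is no psd
6×6 matrix C = (C_{ij}) with 2×2 blocks satisfying I₂ = ∑ᵢ C_{ii},
diag(1,−1) = C₁₃ + C₃₁ and E₁₂+E₂₁ = C₂₃ + C₃₂. -/
theorem disc_criterion_inexact :
    ¬ ∃ C : Matrix (Fin 3 × Fin 2) (Fin 3 × Fin 2) ℝ,
      C.PosSemidef ∧
      (∀ s t : Fin 2, (∑ i : Fin 3, C (i, s) (i, t)) =
        (1 : Matrix (Fin 2) (Fin 2) ℝ) s t) ∧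
      (∀ s t : Fin 2, C (0, s) (2, t) + C (2, s) (0, t) =
        !![(1 : ℝ), 0; 0, -1] s t) ∧
      (∀ s t : Fin 2, C (1, s) (2, t) + C (2, s) (1, t) =
        !![(0 : ℝ), 1; 1, 0] s t) := by
  rintro ⟨C, hpsd, h1, h2, h3⟩
  have form : ∀ x : (Fin 3 × Fin 2) → ℝ,
      0 ≤ ∑ u : Fin 3 × Fin 2, x u * ∑ v : Fin 3 × Fin 2, C u v * x v := by
    intro x
    simpa [dotProduct, Matrix.mulVec] using hpsd.dotProduct_mulVec_nonneg x
  -- trace conditions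
  have hd0 : C (0,0) (0,0) + C (1,0) (1,0) + C (2,0) (2,0) = 1 := by
    have := h1 0 0
    simpa [Fin.sum_univ_succ, Matrix.one_apply, add_assoc] using this
  have hd1 : C (0,1) (0,1) + C (1,1) (1,1) + C (2,1) (2,1) = 1 := by
    have := h1 1 1
    simpa [Fin.sum_univ_succ, Matrix.one_apply, add_assoc] using this
  have h200 : C (0,0) (2,0) + C (2,0) (0,0) = 1 := by simpa using h2 0 0
  have h211 : C (0,1) (2,1) + C (2,1) (0,1) = -1 := by simpa using h2 1 1
  have h301 : C (1,0) (2,1) + C (2,0) (1,1) = 1 := by simpa using h3 0 1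
  have h310 : C (1,1) (2,0) + C (2,1) (1,0) = 1 := by simpa using h3 1 0
  -- quadratic form at vectors supported on two coordinates
  have key : ∀ u v : Fin 3 × Fin 2, u ≠ v → ∀ s t : ℝ,
      0 ≤ s * s * C u u + s * t * (C u v + C v u) + t * t * C v v := by
    intro u v huv s t
    have h := form (fun p => if p = u then s else if p = v then t else 0)
    have e1 : ∀ w : Fin 3 × Fin 2,
        (∑ v' : Fin 3 × Fin 2, C w v' * (if v' = u then s else if v' = v then t else 0))
          = C w u * s + C w v * t := by
      intro w
      rw [Finset.sum_eq_add_of_mem u v (Finset.mem_univ _) (Finset.mem_univ _) huv]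
      · simp [huv, Ne.symm huv]
      · intro c _ hc
        simp [hc.1, hc.2]
    simp only [e1] at h
    rw [Finset.sum_eq_add_of_mem u v (Finset.mem_univ _) (Finset.mem_univ _) huv
      (by intro c _ hc; simp [hc.1, hc.2])] at h
    simp only [if_pos rfl, if_neg huv, if_neg (Ne.symm huv), if_true] at h
    nlinarith [h]
  have lin : ∀ m k : ℝ, (∀ t : ℝ, 0 ≤ t * m + k) → m = 0 := by
    intro m k h
    by_contra hm
    have h1 := h ((-k - 1) / m)
    rw [div_mul_cancel₀ _ hm] at h1
    linarith
  -- a + f ≥ 1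
  have k1 := key (0,0) (2,0) (by decide) (-1) 1
  have k2 := key (0,1) (2,1) (by decide) 1 1
  -- diagonal entries nonneg
  have k3 := key (1,0) (0,0) (by decide) 1 0
  have k4 := key (1,1) (0,1) (by decide) 1 0
  have hc : C (1,0) (1,0) = 0 := by nlinarith [k1, k3]
  have he : C (1,1) (1,1) = 0 := by nlinarith [k2, k4]
  have hx : C (1,0) (2,1) + C (2,1) (1,0) = 0 := by
    refine lin _ (C (2,1) (2,1)) fun t => ?_
    have := key (1,0) (2,1) (by decide) t 1
    rw [hc] at this
    nlinarith [this]
  have hy : C (1,1) (2,0) + C (2,0) (1,1) = 0 := by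
    refine lin _ (C (2,0) (2,0)) fun t => ?_
    have := key (1,1) (2,0) (by decide) t 1
    rw [he] at this
    nlinarith [this]
  linarith [h301, h310, hx, hy]
end

section
/- Rounding lemma from the 3-SAT reduction: let p ∈ [−1,1]^n satisfy |p_i| ≥ 1 − ε for all i with 0 < ε < 1/3, and suppose p satisfies a clause inequality σ_1 p_{i_1} + σ_2 p_{i_2} + σ_3 p_{i_3} ≥ −1 with signs σ_j ∈ {−1, +1}. Then the vector p' ∈ {−1,1}^n obtained by componentwise rounding (p'_i = 1 if p_i > 0, p'_i = −1 if p_i < 0) also satisfies σ_1 p'_{i_1} + σ_2 p'_{i_2} + σ_3 p'_{i_3} ≥ −1. -/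
/-- Rounding lemma from the 3-SAT reduction: if p ∈ [−1,1]ⁿ has all
coordinates within ε < 1/3 of ±1 and satisfies a clause inequality
σ₁ p_{i₁} + σ₂ p_{i₂} + σ₃ p_{i₃} ≥ −1 with σⱼ ∈ {−1,1}, then the
componentwise rounded ±1 vector also satisfies it. -/
theorem rounding_lemma {n : ℕ} (p : Fin n → ℝ) (ε : ℝ)
    (hε0 : 0 < ε) (hε : ε < 1 / 3)
    (hbox : ∀ i, |p i| ≤ 1)
    (hclose : ∀ i, 1 - ε ≤ |p i|)
    (σ : Fin 3 → ℝ) (hσ : ∀ j, σ j = 1 ∨ σ j = -1)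
    (idx : Fin 3 → Fin n) (hidx : Function.Injective idx)
    (hineq : -1 ≤ ∑ j : Fin 3, σ j * p (idx j)) :
    -1 ≤ ∑ j : Fin 3, σ j * (if 0 < p (idx j) then (1 : ℝ) else -1) := by
  have key : ∀ j : Fin 3, σ j * (if 0 < p (idx j) then (1 : ℝ) else -1) = 1 ∨
      (σ j * (if 0 < p (idx j) then (1 : ℝ) else -1) = -1 ∧
        σ j * p (idx j) ≤ -1 + ε) := by
    intro j
    have hb := hbox (idx j)
    have hc := hclose (idx j)
    rcases abs_cases (p (idx j)) with ⟨h1, h2⟩ | ⟨h1, h2⟩ <;>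
      rcases hσ j with hs | hs <;>
      simp only [hs] <;> split_ifs with hpos <;>
      first
        | (exfalso; nlinarith)
        | (refine Or.inr ⟨by ring, by nlinarith⟩)
        | (exact Or.inl (by ring))
  simp only [Fin.sum_univ_three] at hineq ⊢
  rcases key 0 with h0 | ⟨h0, h0'⟩ <;> rcases key 1 with h1 | ⟨h1, h1'⟩ <;>
    rcases key 2 with h2 | ⟨h2, h2'⟩ <;> rw [h0, h1, h2] <;> linarith
end
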